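/- The log canonical threshold of the hypersurface F = {x³y + y²z + xz² = 0} ⊂ ℂ³ at the origin equals 12/13. -/

import Mathlib

open MvPolynomial

/-- A hypersurface `{f = 0}` is smooth outside the origin: at every nonzero point of the
zero locus some partial derivative does not vanish. -/
def SmoothOutsideOrigin (f : MvPolynomial (Fin 3) ℂ) : Prop :=
  ∀ x : Fin 3 → ℂ, x ≠ 0 → eval x f = 0 → ∃ i, eval x (pderiv i f) ≠ 0

lemma aux_zero (a b c : ℂ) (h1 : 3*a^2*b + c^2 = 0) (h2 : a^3 + 2*b*c = 0)
    (h3 : b^2 + 2*a*c = 0) : a = 0 ∧ b = 0 ∧ c = 0 := by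
  have key : 13 * (a^3 * c) = 0 := by linear_combination c*h2 - 2*b*h1 + 6*a^2*h3
  have hac : a = 0 ∨ c = 0 := by
    rcases mul_eq_zero.1 key with h | h
    · norm_num at h
    · rcases mul_eq_zero.1 h with h | h
      · exact Or.inl (pow_eq_zero_iff (by norm_num) |>.1 h)
      · exact Or.inr h
  rcases hac with ha | hc
  · subst ha
    have hc : c = 0 := by
      have : c^2 = 0 := by linear_combination h1
      exact pow_eq_zero_iff (by norm_num) |>.1 this
    subst hc
    have : b^2 = 0 := by linear_combination h3
    exact ⟨rfl, pow_eq_zero_iff (by norm_num) |>.1 this, rfl⟩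
  · subst hc
    have hb : b = 0 := by
      have : b^2 = 0 := by linear_combination h3
      exact pow_eq_zero_iff (by norm_num) |>.1 this
    have ha : a = 0 := by
      have : a^3 = 0 := by linear_combination h2
      exact pow_eq_zero_iff (by norm_num) |>.1 this
    exact ⟨ha, hb, rfl⟩

lemma smooth_f : SmoothOutsideOrigin (X 0 ^ 3 * X 1 + X 1 ^ 2 * X 2 + X 0 * X 2 ^ 2) := by
  intro x hx _
  by_contra h
  push_neg at h
  have h0 := h 0
  have h1 := h 1
  have h2 := h 2
  simp only [map_add, map_mul, map_pow, pderiv_mul, pderiv_pow, pderiv_X, map_add] at h0 h1 h2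
  simp [Pi.single_apply] at h0 h1 h2
  have key := aux_zero (x 0) (x 1) (x 2) (by linear_combination h0)
    (by linear_combination h1) (by linear_combination h2)
  apply hx
  funext i
  fin_cases i <;> simp [key.1, key.2.1, key.2.2]

lemma whom_f : (X 0 ^ 3 * X 1 + X 1 ^ 2 * X 2 + X 0 * X 2 ^ 2 :
    MvPolynomial (Fin 3) ℂ).IsWeightedHomogeneous ![3,4,5] 13 := by
  have h0 : (X 0 : MvPolynomial (Fin 3) ℂ).IsWeightedHomogeneous ![3,4,5] 3 :=
    isWeightedHomogeneous_X _ _ _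
  have h1 : (X 1 : MvPolynomial (Fin 3) ℂ).IsWeightedHomogeneous ![3,4,5] 4 :=
    isWeightedHomogeneous_X _ _ _
  have h2 : (X 2 : MvPolynomial (Fin 3) ℂ).IsWeightedHomogeneous ![3,4,5] 5 :=
    isWeightedHomogeneous_X _ _ _
  have p0 : (X 0 ^ 3 * X 1 : MvPolynomial (Fin 3) ℂ).IsWeightedHomogeneous ![3,4,5] 13 := by
    have := ((h0.mul h0).mul h0).mul h1
    have e : (X 0 ^ 3 * X 1 : MvPolynomial (Fin 3) ℂ) = X 0 * X 0 * X 0 * X 1 := by ring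
    rw [e]; exact this
  have p1 : (X 1 ^ 2 * X 2 : MvPolynomial (Fin 3) ℂ).IsWeightedHomogeneous ![3,4,5] 13 := by
    have := (h1.mul h1).mul h2
    have e : (X 1 ^ 2 * X 2 : MvPolynomial (Fin 3) ℂ) = X 1 * X 1 * X 2 := by ring
    rw [e]; exact this
  have p2 : (X 0 * X 2 ^ 2 : MvPolynomial (Fin 3) ℂ).IsWeightedHomogeneous ![3,4,5] 13 := by
    have := (h0.mul h2).mul h2
    have e : (X 0 * X 2 ^ 2 : MvPolynomial (Fin 3) ℂ) = X 0 * X 2 * X 2 := by ring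
    rw [e]; exact this
  exact (p0.add p1).add p2

theorem stmt11 (lct : MvPolynomial (Fin 3) ℂ → ℚ)
    (hformula : ∀ (f : MvPolynomial (Fin 3) ℂ) (w : Fin 3 → ℕ) (d : ℕ),
      (∀ i, 0 < w i) → 0 < d → f.IsWeightedHomogeneous w d → SmoothOutsideOrigin f →
      lct f = min 1 ((∑ i, (w i : ℚ)) / (d : ℚ))) :
    lct (X 0 ^ 3 * X 1 + X 1 ^ 2 * X 2 + X 0 * X 2 ^ 2) = 12 / 13 := by
  rw [hformula _ ![3,4,5] 13 (by decide) (by norm_num) whom_f smooth_f]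
  rw [Fin.sum_univ_three]
  norm_num [Matrix.cons_val_two, Matrix.tail_cons, Matrix.head_cons]
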